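/- Let d ∈ ℕ and C > 0. Let 𝒰_d be the set of all subsets of [d] = {1, …, d}, and for weights γ : 𝒰_d → [0,∞) define (T↑ γ)_u := Σ_{v ∈ 𝒰_d, u ⊆ v} C^{2|v|} γ_v and (T↓ γ)_u := C^{−2|u|} (Δ_{[d] ∖ u} γ)_u. Then T↑ maps the set of all weights on 𝒰_d bijectively onto the set of completely monotone weights on 𝒰_d, and its inverse is T↓; that is: T↑ γ is completely monotone for every weight γ, T↓(T↑ γ) = γ for every weight γ, and T↑(T↓ γ) = γ for every completely monotone weight γ. -/
import Mathlib


open Finset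

/-- The difference operator `Δ_v` on families indexed by finite subsets:
`(Δ_v γ)_u := Σ_{w ⊆ v} (−1)^{|w|} γ_{u ∪ w}`. -/
noncomputable def Δ {α : Type*} [DecidableEq α] (v : Finset α) (γ : Finset α → ℝ)
    (u : Finset α) : ℝ :=
  ∑ w ∈ v.powerset, (-1 : ℝ) ^ w.card * γ (u ∪ w)

lemma alt_sum {α : Type*} [DecidableEq α] (x : Finset α) :
    ∑ m ∈ x.powerset, (-1 : ℝ) ^ m.card = if x = ∅ then 1 else 0 := by
  have h := Finset.sum_powerset_neg_one_pow_card (x := x)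
  have h2 : ((∑ m ∈ x.powerset, (-1 : ℤ) ^ m.card : ℤ) : ℝ)
      = ∑ m ∈ x.powerset, (-1 : ℝ) ^ m.card := by push_cast; rfl
  rw [← h2, h]
  split <;> norm_num

lemma delta_Tup {d : ℕ} (C : ℝ) (Tup : (Finset (Fin d) → ℝ) → Finset (Fin d) → ℝ)
    (hTup : ∀ γ u, Tup γ u = ∑ v : Finset (Fin d),
      if u ⊆ v then C ^ (2 * v.card) * γ v else 0)
    (γ : Finset (Fin d) → ℝ) (v u : Finset (Fin d)) :
    Δ v (Tup γ) u = ∑ s : Finset (Fin d),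
      if u ⊆ s ∧ Disjoint v s then C ^ (2 * s.card) * γ s else 0 := by
  unfold Δ
  simp only [hTup, Finset.mul_sum]
  rw [Finset.sum_comm]
  refine Finset.sum_congr rfl fun s _ => ?_
  by_cases hu : u ⊆ s
  · have huw : ∀ w : Finset (Fin d), (u ∪ w ⊆ s) = (w ⊆ s) := by
      intro w; simp [Finset.union_subset_iff, hu]
    simp only [huw, mul_ite, mul_zero, Finset.sum_ite, Finset.sum_const_zero, add_zero]
    have hfilter : (v.powerset.filter (fun w => w ⊆ s)) = (v ∩ s).powerset := by
      ext w
      simp only [Finset.mem_filter, Finset.mem_powerset, Finset.subset_inter_iff]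
    rw [hfilter, ← Finset.sum_mul, alt_sum]
    simp only [hu, true_and, ← Finset.disjoint_iff_inter_eq_empty]
    split <;> simp
  · rw [if_neg (fun h => hu h.1)]
    refine Finset.sum_eq_zero fun w _ => ?_
    rw [if_neg (fun h => hu (Finset.union_subset_iff.1 h).1), mul_zero]

theorem stmt7 (d : ℕ) (C : ℝ) (hC : 0 < C)
    (Tup Td : (Finset (Fin d) → ℝ) → Finset (Fin d) → ℝ)
    (hTup : ∀ γ u, Tup γ u = ∑ v : Finset (Fin d),
      if u ⊆ v then C ^ (2 * v.card) * γ v else 0)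
    (hTd : ∀ γ u, Td γ u = (C ^ (2 * u.card))⁻¹ * Δ (Finset.univ \ u) γ u) :
    (∀ γ : Finset (Fin d) → ℝ, (∀ u, 0 ≤ γ u) → ∀ v u, 0 ≤ Δ v (Tup γ) u) ∧
    (∀ γ : Finset (Fin d) → ℝ, (∀ u, 0 ≤ γ u) → Td (Tup γ) = γ) ∧
    (∀ γ : Finset (Fin d) → ℝ, (∀ v u, 0 ≤ Δ v γ u) →
      (∀ u, 0 ≤ Td γ u) ∧ Tup (Td γ) = γ) := by
  have hCne : C ≠ 0 := ne_of_gt hC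
  have key := delta_Tup C Tup hTup
  refine ⟨?_, ?_, ?_⟩
  · intro γ hγ v u
    rw [key γ v u]
    refine Finset.sum_nonneg fun s _ => ?_
    split
    · exact mul_nonneg (pow_nonneg hC.le _) (hγ s)
    · exact le_refl 0
  · intro γ _
    funext u
    rw [hTd, key]
    have hcond : ∀ s : Finset (Fin d),
        (u ⊆ s ∧ Disjoint (Finset.univ \ u) s) ↔ s = u := by
      intro s
      constructor
      · rintro ⟨h1, h2⟩
        refine Finset.Subset.antisymm (fun x hx => ?_) h1
        by_contra hxu
        exact (Finset.disjoint_right.1 h2 hx) (by simp [hxu])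
      · rintro rfl
        exact ⟨Finset.Subset.refl _, Finset.sdiff_disjoint⟩
    rw [Finset.sum_congr rfl fun s _ => if_congr (hcond s) rfl rfl,
      Finset.sum_ite_eq' Finset.univ u fun s => C ^ (2 * s.card) * γ s]
    simp [inv_mul_cancel_left₀ (pow_ne_zero _ hCne), ← mul_assoc,
      inv_mul_cancel₀ (pow_ne_zero _ hCne)]
  · intro γ hγ
    have hTdval : ∀ u, Td γ u = (C ^ (2 * u.card))⁻¹ * Δ (Finset.univ \ u) γ u := hTd γ
    refine ⟨fun u => by
      rw [hTdval]
      exact mul_nonneg (inv_nonneg.2 (pow_nonneg hC.le _)) (hγ _ _), ?_⟩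
    funext u
    rw [hTup]
    have step1 : ∀ v : Finset (Fin d),
        (if u ⊆ v then C ^ (2 * v.card) * Td γ v else 0)
          = ∑ s : Finset (Fin d),
            if u ⊆ v ∧ v ⊆ s then (-1 : ℝ) ^ (s \ v).card * γ s else 0 := by
      intro v
      by_cases huv : u ⊆ v
      · rw [if_pos huv, hTdval, ← mul_assoc,
          mul_inv_cancel₀ (pow_ne_zero _ hCne), one_mul]
        unfold Δ
        rw [Finset.sum_nbij' (i := fun w : Finset (Fin d) => v ∪ w)
          (j := fun s : Finset (Fin d) => s \ v)
          (t := Finset.univ.filter (fun s => v ⊆ s))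
          (g := fun s => (-1 : ℝ) ^ (s \ v).card * γ s)]
        · rw [Finset.sum_filter]
          refine Finset.sum_congr rfl fun s _ => ?_
          simp [huv]
        · intro w hw
          simp
        · intro s hs
          simp only [Finset.mem_powerset]
          intro x hx
          simp [Finset.mem_sdiff.1 hx]
        · intro w hw
          simp only [Finset.mem_powerset] at hw
          apply Finset.union_sdiff_cancel_left
          exact Finset.disjoint_left.2 fun x hxv hxw => (Finset.mem_sdiff.1 (hw hxw)).2 hxv
        · intro s hs
          simp only [Finset.mem_filter] at hs
          exact Finset.union_sdiff_of_subset hs.2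
        · intro w hw
          simp only [Finset.mem_powerset] at hw
          have hd : Disjoint v w :=
            Finset.disjoint_left.2 fun x hxv hxw => (Finset.mem_sdiff.1 (hw hxw)).2 hxv
          rw [Finset.union_sdiff_cancel_left hd]
      · rw [if_neg huv]
        exact (Finset.sum_eq_zero fun s _ => if_neg (fun h => huv h.1)).symm
    rw [Finset.sum_congr rfl fun v _ => step1 v, Finset.sum_comm]
    have step2 : ∀ s : Finset (Fin d),
        (∑ v : Finset (Fin d),
          if u ⊆ v ∧ v ⊆ s then (-1 : ℝ) ^ (s \ v).card * γ s else 0)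
          = if s = u then γ s else 0 := by
      intro s
      by_cases hus : u ⊆ s
      · rw [Finset.sum_ite, Finset.sum_const_zero, add_zero]
        have : ∑ v ∈ Finset.univ.filter (fun v => u ⊆ v ∧ v ⊆ s),
            (-1 : ℝ) ^ (s \ v).card * γ s
            = ∑ t ∈ (s \ u).powerset, (-1 : ℝ) ^ t.card * γ s := by
          refine Finset.sum_nbij' (i := fun v => s \ v) (j := fun t => s \ t) ?_ ?_ ?_ ?_ ?_
          · intro v hv
            simp only [Finset.mem_filter, Finset.mem_univ, true_and] at hv
            exact Finset.mem_powerset.2 (Finset.sdiff_subset_sdiff (le_refl s) hv.1)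
          · intro t ht
            simp only [Finset.mem_powerset] at ht
            simp only [Finset.mem_filter, Finset.mem_univ, true_and]
            constructor
            · intro x hx
              have hxs : x ∈ s := hus hx
              simp only [Finset.mem_sdiff, hxs, true_and]
              exact fun hxt => (Finset.mem_sdiff.1 (ht hxt)).2 hx
            · exact Finset.sdiff_subset
          · intro v hv
            simp only [Finset.mem_filter, Finset.mem_univ, true_and] at hv
            exact Finset.sdiff_sdiff_eq_self hv.2
          · intro t ht
            simp only [Finset.mem_powerset] at ht
            exact Finset.sdiff_sdiff_eq_self (ht.trans Finset.sdiff_subset)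
          · intro v hv; rfl
        rw [this, ← Finset.sum_mul, alt_sum]
        by_cases hsu : s = u
        · subst hsu; simp
        · rw [if_neg hsu, if_neg, zero_mul]
          intro h
          exact hsu (Finset.Subset.antisymm (Finset.sdiff_eq_empty_iff_subset.1 h) hus)
      · rw [if_neg (fun h => hus (by rw [h]))]
        exact Finset.sum_eq_zero fun v _ => if_neg (fun h => hus (h.1.trans h.2))
    rw [Finset.sum_congr rfl fun s _ => step2 s,
      Finset.sum_ite_eq' Finset.univ u fun s => γ s]
    simp
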